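/- Fix y ∈ 𝒴 with L_{yy} > 0, let c = c(y) be the core of the part containing y, and let 1 ≤ k ≤ N. Then ∑_{Y k-singular, y ∈ Y} det(L_Y) = L_{yy} · ∑_{S} det( (L − L_{yy}^{−1} · L_{·,y} L_{y,·})_S ), where the second sum ranges over all S ⊆ 𝒴 with |S| = k−1, S singular with respect to Π, and S ∩ 𝒴_c = ∅, and where L_{·,y} L_{y,·} denotes the rank-one N×N matrix with entries L_{iy}·L_{yj}. -/

import Mathlib

open Matrix Finset

variable {𝒴 : Type*}

/-- Principal minor of `A` indexed by the finite set `S`: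
the determinant of the principal submatrix `A_S`. -/
noncomputable def pminor [DecidableEq 𝒴] (A : Matrix 𝒴 𝒴 ℝ) (S : Finset 𝒴) : ℝ :=
  (A.submatrix (fun i : S => (i : 𝒴)) (fun j : S => (j : 𝒴))).det

/-- `Y` is singular with respect to the partition whose parts are the fibers of the
core map `part` (so `𝒴_c = part⁻¹(c)`): every part contains at most one element of `Y`. -/
def IsSingular [DecidableEq 𝒴] (part : 𝒴 → 𝒴) (Y : Finset 𝒴) : Prop :=
  ∀ c : 𝒴, (Y.filter fun y => part y = c).card ≤ 1

instance [DecidableEq 𝒴] [Fintype 𝒴] (part : 𝒴 → 𝒴) : DecidablePred (IsSingular part) :=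
  fun _ => by unfold IsSingular; infer_instance

/-- The size `|𝒴_c|` of the part with core `c`. -/
def psize [Fintype 𝒴] [DecidableEq 𝒴] (part : 𝒴 → 𝒴) (c : 𝒴) : ℕ :=
  (Finset.univ.filter fun y => part y = c).card

/-- The rescaled core kernel `L̃` with entries `L̃_{c,c'} = sqrt(|𝒴_c|·|𝒴_{c'}|)·L_{c,c'}`. -/
noncomputable def coreK [Fintype 𝒴] [DecidableEq 𝒴] (L : Matrix 𝒴 𝒴 ℝ) (part : 𝒴 → 𝒴) :
    Matrix 𝒴 𝒴 ℝ :=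
  fun i j => Real.sqrt ((psize part i : ℝ) * (psize part j : ℝ)) * L i j

private lemma schur_key [DecidableEq 𝒴] (L : Matrix 𝒴 𝒴 ℝ) (y : 𝒴) (hy : L y y ≠ 0)
    (S : Finset 𝒴) (hyS : y ∉ S) :
    pminor L (insert y S) = L y y *
      pminor (fun i j => L i j - (L y y)⁻¹ * (L i y * L y j)) S := by
  set T : Finset 𝒴 := insert y S with hT
  let e : Unit ⊕ {x // x ∈ S} ≃ {x // x ∈ T} :=
    { toFun := fun z => match z with
        | Sum.inl _ => ⟨y, mem_insert_self y S⟩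
        | Sum.inr s => ⟨s.1, mem_insert_of_mem s.2⟩
      invFun := fun z => if h : z.1 ∈ S then Sum.inr ⟨z.1, h⟩ else Sum.inl ()
      left_inv := by
        rintro (⟨⟩ | s)
        · simp [hyS]
        · simp
      right_inv := by
        rintro ⟨z, hz⟩
        rcases mem_insert.mp hz with h | h
        · subst h; simp [hyS]
        · simp [h] }
  set A : Matrix Unit Unit ℝ := of fun _ _ => L y y with hA
  set B : Matrix Unit {x // x ∈ S} ℝ := of fun _ s => L y s.1 with hB
  set Cm : Matrix {x // x ∈ S} Unit ℝ := of fun s _ => L s.1 y with hC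
  set D : Matrix {x // x ∈ S} {x // x ∈ S} ℝ := of fun s t => L s.1 t.1 with hD
  have hsub : (L.submatrix (fun i : T => (i : 𝒴)) (fun j : T => (j : 𝒴))).submatrix e e =
      Matrix.fromBlocks A B Cm D := by
    ext i j
    rcases i with (⟨⟩ | s) <;> rcases j with (⟨⟩ | t) <;> rfl
  haveI : Invertible A := by
    apply A.invertibleOfIsUnitDet
    rw [Matrix.det_unique]
    exact (isUnit_iff_ne_zero).mpr hy
  have hdet : pminor L T = (Matrix.fromBlocks A B Cm D).det := by
    rw [pminor, ← Matrix.det_submatrix_equiv_self e, hsub]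
  rw [hdet, Matrix.det_fromBlocks₁₁]
  have hAdet : A.det = L y y := Matrix.det_unique A
  have hinv : (⅟A) default default = (L y y)⁻¹ := by
    have h2 : (A * ⅟A) default default = (1 : Matrix Unit Unit ℝ) default default := by
      rw [mul_invOf_self]
    rw [Matrix.mul_apply] at h2
    simp only [Finset.univ_unique, Finset.sum_singleton, Matrix.one_apply_eq, hA,
      Matrix.of_apply] at h2
    exact eq_inv_of_mul_eq_one_left (by rw [mul_comm]; exact h2)
  have hschur : D - Cm * ⅟A * B =
      Matrix.submatrix (fun i j => L i j - (L y y)⁻¹ * (L i y * L y j))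
        (fun i : S => (i : 𝒴)) (fun j : S => (j : 𝒴)) := by
    ext s t
    simp only [Matrix.sub_apply, Matrix.mul_apply, Finset.univ_unique, Finset.sum_singleton,
      Matrix.submatrix_apply, hD, hC, hB, Matrix.of_apply, hinv]
    show _ = L s t - (L y y)⁻¹ * (L (s : 𝒴) y * L y (t : 𝒴))
    ring
  rw [hschur, hAdet]; rfl

/-- for a fixed `y` with `L_{yy} > 0` lying in the part with core `c = c(y)`,
the sum of `det(L_Y)` over all `k`-singular `Y` containing `y` equals
`L_{yy} · ∑_S det((L − L_{yy}⁻¹·L_{·,y}L_{y,·})_S)`, the sum being over all `(k−1)`-element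
singular `S` disjoint from the part `𝒴_c`. -/
theorem sum_singular_containing_point
    [Fintype 𝒴] [DecidableEq 𝒴]
    (L : Matrix 𝒴 𝒴 ℝ) (hsym : L.IsSymm)
    (part : 𝒴 → 𝒴) (C : Finset 𝒴)
    (hmem : ∀ y, part y ∈ C) (hfix : ∀ c ∈ C, part c = c)
    (y : 𝒴) (hy : 0 < L y y)
    (k : ℕ) (hk1 : 1 ≤ k) (hkN : k ≤ Fintype.card 𝒴) :
    ∑ Y ∈ (Finset.univ.powersetCard k).filter
        (fun Y => IsSingular part Y ∧ y ∈ Y), pminor L Y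
      = L y y *
        ∑ S ∈ (Finset.univ.powersetCard (k - 1)).filter
            (fun S => IsSingular part S ∧ ∀ s ∈ S, part s ≠ part y),
          pminor (fun i j => L i j - (L y y)⁻¹ * (L i y * L y j)) S := by
  classical
  have hyy : L y y ≠ 0 := ne_of_gt hy
  rw [Finset.mul_sum]
  refine Finset.sum_nbij' (fun Y => Y.erase y) (fun S => insert y S) ?_ ?_ ?_ ?_ ?_
  · intro Y hY
    simp only [Finset.mem_filter, Finset.mem_powersetCard_univ] at hY ⊢
    obtain ⟨hcard, hsing, hyY⟩ := hY
    refine ⟨by rw [Finset.card_erase_of_mem hyY, hcard], fun c => ?_, fun s hs hps => ?_⟩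
    · exact le_trans (Finset.card_le_card (Finset.filter_subset_filter _
        (Finset.erase_subset y Y))) (hsing c)
    · have hsY : s ∈ Y := Finset.mem_of_mem_erase hs
      have hsy : s ≠ y := Finset.ne_of_mem_erase hs
      have h2 : ({s, y} : Finset 𝒴) ⊆ Y.filter (fun z => part z = part y) := by
        intro z hz
        rcases Finset.mem_insert.mp hz with rfl | hz
        · exact Finset.mem_filter.mpr ⟨hsY, hps⟩
        · rw [Finset.mem_singleton] at hz
          subst hz
          exact Finset.mem_filter.mpr ⟨hyY, rfl⟩
      have := le_trans (Finset.card_le_card h2) (hsing (part y))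
      rw [Finset.card_insert_of_notMem (by simpa using hsy), Finset.card_singleton] at this
      omega
  · intro S hS
    simp only [Finset.mem_filter, Finset.mem_powersetCard_univ] at hS ⊢
    obtain ⟨hcard, hsing, hdisj⟩ := hS
    have hyS : y ∉ S := fun h => hdisj y h rfl
    refine ⟨by rw [Finset.card_insert_of_notMem hyS, hcard]; omega, fun c => ?_,
      Finset.mem_insert_self y S⟩
    rw [Finset.filter_insert]
    by_cases hc : part y = c
    · have hSf : S.filter (fun z => part z = c) = ∅ := by
        apply Finset.filter_eq_empty_iff.mpr
        intro s hs h
        exact hdisj s hs (h.trans hc.symm)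
      simp [hc, hSf]
    · simp only [hc, if_false]
      exact hsing c
  · intro Y hY
    simp only [Finset.mem_filter] at hY
    exact Finset.insert_erase hY.2.2
  · intro S hS
    simp only [Finset.mem_filter] at hS
    exact Finset.erase_insert (fun h => hS.2.2 y h rfl)
  · intro Y hY
    simp only [Finset.mem_filter] at hY
    have := schur_key L y hyy (Y.erase y) (Finset.notMem_erase y Y)
    rwa [Finset.insert_erase hY.2.2] at this
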